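/- Let A, B, C ∈ ℤ³ be linearly independent integer vectors, let P be the convex hull of {0, A, B, C} (an integer pyramid with vertex at the origin and triangular base), let K = {λ₁A + λ₂B + λ₃C : λ₁, λ₂, λ₃ ≥ 0} be the cone generated by P, and let d be a positive real number. Then the set of pairs (n, m), where n ∈ ℤ³ is primitive and m is an integer with 1 ≤ m ≤ d, such that the set {v ∈ K : ⟨n, v⟩ ≤ m} is bounded and contains P, and the set {v ∈ K : ⟨n, v⟩ > m} is nonempty, is finite. -/
import Mathlib

/-- A bounded set cannot contain the whole ray `t • w` for `w ≠ 0`. -/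
lemma ray_not_bounded {S : Set (Fin 3 → ℝ)} (hS : Bornology.IsBounded S)
    {w : Fin 3 → ℝ} (hw : w ≠ 0) (h : ∀ t : ℝ, 0 ≤ t → t • w ∈ S) : False := by
  obtain ⟨r, hr⟩ := isBounded_iff_forall_norm_le.mp hS
  have hwn : 0 < ‖w‖ := norm_pos_iff.mpr hw
  set t := (|r| + 1) / ‖w‖ with ht
  have ht0 : 0 ≤ t := div_nonneg (by positivity) hwn.le
  have h1 := hr _ (h t ht0)
  have h2 : ‖t • w‖ = |r| + 1 := by
    rw [norm_smul, Real.norm_eq_abs, abs_of_nonneg ht0, ht, div_mul_cancel₀ _ hwn.ne']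
  linarith [le_abs_self r]

lemma pos_of_bounded (n : Fin 3 → ℤ) (m : ℤ) (S : Set (Fin 3 → ℝ))
    (hb : Bornology.IsBounded S) (w : Fin 3 → ℤ) (hw : w ≠ 0) (hm : 1 ≤ m)
    (hmem : ∀ t : ℝ, 0 ≤ t →
      (∑ i, (n i : ℝ) * (t • (fun j => (w j : ℝ))) i ≤ (m : ℝ)) →
      t • (fun j => (w j : ℝ)) ∈ S) :
    1 ≤ ∑ i, n i * w i := by
  by_contra hcon
  push_neg at hcon
  have hle : ∑ i, n i * w i ≤ 0 := by omega
  have hw' : (fun j => (w j : ℝ)) ≠ 0 := by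
    intro h0
    apply hw
    funext i
    have : ((w i : ℝ)) = 0 := by simpa using congrFun h0 i
    exact_mod_cast this
  refine ray_not_bounded hb hw' fun t ht => hmem t ht ?_
  have hsum : ∑ i, (n i : ℝ) * (t • (fun j => (w j : ℝ))) i
      = t * ((∑ i, n i * w i : ℤ) : ℝ) := by
    push_cast
    rw [Finset.mul_sum]
    congr 1
    funext i
    simp [Pi.smul_apply]
    ring
  rw [hsum]
  have h1 : t * ((∑ i, n i * w i : ℤ) : ℝ) ≤ 0 :=
    mul_nonpos_of_nonneg_of_nonpos ht (by exact_mod_cast hle)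
  have h2 : (1 : ℝ) ≤ (m : ℝ) := by exact_mod_cast hm
  linarith

theorem stmt8 (A B C : Fin 3 → ℤ)
    (hLI : LinearIndependent ℤ ![A, B, C])
    (d : ℝ) (hd : 0 < d) :
    let A' : Fin 3 → ℝ := fun i => (A i : ℝ)
    let B' : Fin 3 → ℝ := fun i => (B i : ℝ)
    let C' : Fin 3 → ℝ := fun i => (C i : ℝ)
    let P : Set (Fin 3 → ℝ) := convexHull ℝ ({0, A', B', C'} : Set (Fin 3 → ℝ))
    let K : Set (Fin 3 → ℝ) :=
      {v | ∃ l₁ l₂ l₃ : ℝ, 0 ≤ l₁ ∧ 0 ≤ l₂ ∧ 0 ≤ l₃ ∧ v = l₁ • A' + l₂ • B' + l₃ • C'}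
    {nm : (Fin 3 → ℤ) × ℤ |
      Int.gcd (Int.gcd (nm.1 0) (nm.1 1)) (nm.1 2) = 1 ∧
      1 ≤ nm.2 ∧ (nm.2 : ℝ) ≤ d ∧
      Bornology.IsBounded {v ∈ K | ∑ i, (nm.1 i : ℝ) * v i ≤ (nm.2 : ℝ)} ∧
      P ⊆ {v ∈ K | ∑ i, (nm.1 i : ℝ) * v i ≤ (nm.2 : ℝ)} ∧
      {v ∈ K | (nm.2 : ℝ) < ∑ i, (nm.1 i : ℝ) * v i}.Nonempty}.Finite := by
  intro A' B' C' P K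
  have hdet : (Matrix.of ![A, B, C]).det ≠ 0 := by
    intro h0
    obtain ⟨w, hw0, hwM⟩ := Matrix.exists_vecMul_eq_zero_iff.mpr h0
    apply hw0
    funext i
    refine Fintype.linearIndependent_iff.mp hLI w ?_ i
    funext j
    have := congrFun hwM j
    simpa [Matrix.vecMul, dotProduct, Fin.sum_univ_three] using this
  set f : ((Fin 3 → ℤ) × ℤ) → (ℤ × ℤ × ℤ × ℤ) := fun nm =>
    (∑ i, nm.1 i * A i, ∑ i, nm.1 i * B i, ∑ i, nm.1 i * C i, nm.2) with hf
  have hinj : Function.Injective f := by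
    intro x y hxy
    simp only [hf, Prod.mk.injEq] at hxy
    obtain ⟨h1, h2, h3, h4⟩ := hxy
    have hv : x.1 - y.1 = 0 := by
      by_contra hne
      apply hdet
      rw [← Matrix.exists_mulVec_eq_zero_iff]
      refine ⟨x.1 - y.1, hne, ?_⟩
      have hAe : ∑ i, (x.1 i - y.1 i) * A i = 0 := by
        simp only [sub_mul, Finset.sum_sub_distrib, h1, sub_self]
      have hBe : ∑ i, (x.1 i - y.1 i) * B i = 0 := by
        simp only [sub_mul, Finset.sum_sub_distrib, h2, sub_self]
      have hCe : ∑ i, (x.1 i - y.1 i) * C i = 0 := by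
        simp only [sub_mul, Finset.sum_sub_distrib, h3, sub_self]
      simp only [Fin.sum_univ_three] at hAe hBe hCe
      funext j
      fin_cases j <;>
        simp [Matrix.mulVec, dotProduct, Fin.sum_univ_three, Pi.sub_apply] <;>
        linarith
    have hx1 : x.1 = y.1 := by
      funext i
      have := congrFun hv i
      simpa [sub_eq_zero] using this
    exact Prod.ext hx1 h4
  have hsub : {nm : (Fin 3 → ℤ) × ℤ |
      Int.gcd (Int.gcd (nm.1 0) (nm.1 1)) (nm.1 2) = 1 ∧
      1 ≤ nm.2 ∧ (nm.2 : ℝ) ≤ d ∧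
      Bornology.IsBounded {v ∈ K | ∑ i, (nm.1 i : ℝ) * v i ≤ (nm.2 : ℝ)} ∧
      P ⊆ {v ∈ K | ∑ i, (nm.1 i : ℝ) * v i ≤ (nm.2 : ℝ)} ∧
      {v ∈ K | (nm.2 : ℝ) < ∑ i, (nm.1 i : ℝ) * v i}.Nonempty}
      ⊆ f ⁻¹' (Set.Icc ((1 : ℤ), (1 : ℤ), (1 : ℤ), (1 : ℤ)) (⌈d⌉, ⌈d⌉, ⌈d⌉, ⌈d⌉)) := by
    rintro ⟨n, m⟩ ⟨-, hm1, hmd, hb, hP, -⟩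
    have hmD : m ≤ ⌈d⌉ := by
      have := Int.le_ceil d
      exact_mod_cast le_trans (by exact_mod_cast hmd : (m : ℝ) ≤ d) this
    -- lower bounds via boundedness
    have hA0 : A ≠ 0 := by
      have := hLI.ne_zero 0
      simpa using this
    have hB0 : B ≠ 0 := by
      have := hLI.ne_zero 1
      simpa using this
    have hC0 : C ≠ 0 := by
      have := hLI.ne_zero 2
      simpa using this
    have hKA : ∀ t : ℝ, 0 ≤ t → t • A' ∈ K := fun t ht =>
      ⟨t, 0, 0, ht, le_refl _, le_refl _, by simp⟩
    have hKB : ∀ t : ℝ, 0 ≤ t → t • B' ∈ K := fun t ht =>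
      ⟨0, t, 0, le_refl _, ht, le_refl _, by simp⟩
    have hKC : ∀ t : ℝ, 0 ≤ t → t • C' ∈ K := fun t ht =>
      ⟨0, 0, t, le_refl _, le_refl _, ht, by simp⟩
    have haL : 1 ≤ ∑ i, n i * A i :=
      pos_of_bounded n m _ hb A hA0 hm1 fun t ht hs => ⟨hKA t ht, hs⟩
    have hbL : 1 ≤ ∑ i, n i * B i :=
      pos_of_bounded n m _ hb B hB0 hm1 fun t ht hs => ⟨hKB t ht, hs⟩
    have hcL : 1 ≤ ∑ i, n i * C i :=
      pos_of_bounded n m _ hb C hC0 hm1 fun t ht hs => ⟨hKC t ht, hs⟩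
    -- upper bounds via P ⊆ ...
    have hAP : A' ∈ P := subset_convexHull ℝ _ (by simp)
    have hBP : B' ∈ P := subset_convexHull ℝ _ (by simp)
    have hCP : C' ∈ P := subset_convexHull ℝ _ (by simp)
    have haU : ∑ i, n i * A i ≤ m := by
      have := (hP hAP).2
      have h' : ((∑ i, n i * A i : ℤ) : ℝ) ≤ (m : ℝ) := by push_cast; exact this
      exact_mod_cast h'
    have hbU : ∑ i, n i * B i ≤ m := by
      have := (hP hBP).2
      have h' : ((∑ i, n i * B i : ℤ) : ℝ) ≤ (m : ℝ) := by push_cast; exact this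
      exact_mod_cast h'
    have hcU : ∑ i, n i * C i ≤ m := by
      have := (hP hCP).2
      have h' : ((∑ i, n i * C i : ℤ) : ℝ) ≤ (m : ℝ) := by push_cast; exact this
      exact_mod_cast h'
    simp only [Set.mem_preimage, Set.mem_Icc, hf, Prod.le_def]
    exact ⟨⟨haL, hbL, hcL, hm1⟩, ⟨le_trans haU hmD, le_trans hbU hmD, le_trans hcU hmD, hmD⟩⟩
  exact ((Set.finite_Icc _ _).preimage hinj.injOn).subset hsub
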